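/- For a barcode B with sorting permutations τ_b, τ_d and parabolic subgroups P_b = {γ : b_{τ_b(i)} = b_{τ_b γ(i)} ∀i}, P_d = {γ : d_{τ_d(i)} = d_{τ_d γ(i)} ∀i}, the double coset D_B = P_b τ_b⁻¹ τ_d P_d is independent of the choice of sorting permutations τ_b and τ_d. -/

import Mathlib

private lemma sort_unique {n : ℕ} (f : Fin n → ℝ) (σ σ' : Equiv.Perm (Fin n))
    (h : Monotone fun i => f (σ i)) (h' : Monotone fun i => f (σ' i)) :
    ∀ i, f (σ i) = f (σ' i) := by
  have h1 : f ∘ σ = f ∘ Tuple.sort f := Tuple.comp_sort_eq_comp_iff_monotone.mpr h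
  have h2 : f ∘ σ' = f ∘ Tuple.sort f := Tuple.comp_sort_eq_comp_iff_monotone.mpr h'
  intro i
  have := congrFun (h1.trans h2.symm) i
  simpa using this

private lemma subset_aux {n : ℕ} (b d : Fin n → ℝ)
    (τb τd τb' τd' : Equiv.Perm (Fin n))
    (hb : ∀ i, b (τb i) = b (τb' i)) (hd : ∀ i, d (τd i) = d (τd' i)) :
    {x : Equiv.Perm (Fin n) |
        ∃ p ∈ {γ : Equiv.Perm (Fin n) | ∀ i, b (τb i) = b (τb (γ i))},
        ∃ q ∈ {γ : Equiv.Perm (Fin n) | ∀ i, d (τd i) = d (τd (γ i))},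
          x = p * (τb⁻¹ * τd) * q}
      ⊆ {x : Equiv.Perm (Fin n) |
          ∃ p ∈ {γ : Equiv.Perm (Fin n) | ∀ i, b (τb' i) = b (τb' (γ i))},
          ∃ q ∈ {γ : Equiv.Perm (Fin n) | ∀ i, d (τd' i) = d (τd' (γ i))},
            x = p * (τb'⁻¹ * τd') * q} := by
  rintro x ⟨p, hp, q, hq, rfl⟩
  refine ⟨p * (τb⁻¹ * τb'), ?_, τd'⁻¹ * τd * q, ?_, ?_⟩
  · intro i
    simp only [Equiv.Perm.mul_apply]
    rw [← hb (p (τb⁻¹ (τb' i))), ← hp (τb⁻¹ (τb' i)), Equiv.Perm.coe_inv, Equiv.apply_symm_apply]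
  · intro i
    simp only [Equiv.Perm.mul_apply]
    rw [Equiv.Perm.coe_inv, Equiv.apply_symm_apply, ← hq i, hd]
  · group

/-- The double coset `D_B = P_b τ_b⁻¹ τ_d P_d` associated to a barcode is
independent of the choice of sorting permutations `τ_b, τ_d`. -/
theorem stmt13 (n : ℕ) (b d : Fin n → ℝ) (hbd : ∀ i, b i < d i)
    (τb τd τb' τd' : Equiv.Perm (Fin n))
    (hτb : Monotone fun i => b (τb i)) (hτd : Monotone fun i => d (τd i))
    (hτb' : Monotone fun i => b (τb' i)) (hτd' : Monotone fun i => d (τd' i)) :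
    {x : Equiv.Perm (Fin n) |
        ∃ p ∈ {γ : Equiv.Perm (Fin n) | ∀ i, b (τb i) = b (τb (γ i))},
        ∃ q ∈ {γ : Equiv.Perm (Fin n) | ∀ i, d (τd i) = d (τd (γ i))},
          x = p * (τb⁻¹ * τd) * q}
      = {x : Equiv.Perm (Fin n) |
          ∃ p ∈ {γ : Equiv.Perm (Fin n) | ∀ i, b (τb' i) = b (τb' (γ i))},
          ∃ q ∈ {γ : Equiv.Perm (Fin n) | ∀ i, d (τd' i) = d (τd' (γ i))},
            x = p * (τb'⁻¹ * τd') * q} := by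
  have hb := sort_unique b τb τb' hτb hτb'
  have hd := sort_unique d τd τd' hτd hτd'
  exact le_antisymm (subset_aux b d τb τd τb' τd' hb hd)
    (subset_aux b d τb' τd' τb τd (fun i => (hb i).symm) (fun i => (hd i).symm))
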